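/- Let C = (ℝ/ℤ) × ℝ be the cylinder and γ a closed curve in C that is not null-homotopic. For l ∈ ℝ/ℤ let γ_l be the curve t ↦ γ(t) + (l,0). Then the images of γ and γ_l intersect: Im(γ) ∩ Im(γ_l) ≠ ∅. -/

import Mathlib

open Set Real


lemma abs_min_sub_min (a b c : ℝ) : |min a b - min a c| ≤ |b - c| := by
  rcases le_total b c with h | h
  · rw [abs_of_nonpos (by rcases le_total a b with h'|h' <;> rcases le_total a c with h''|h'' <;>
      simp [min_eq_left, min_eq_right, *] <;> linarith)]
    rcases le_total a b with h'|h' <;> rcases le_total a c with h''|h'' <;>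
      simp [min_eq_left, min_eq_right, *, abs_of_nonpos, abs_of_nonneg] <;> linarith [abs_nonneg (b-c)]
  · rw [abs_of_nonneg (by rcases le_total a b with h'|h' <;> rcases le_total a c with h''|h'' <;>
      simp [min_eq_left, min_eq_right, *] <;> linarith)]
    rcases le_total a b with h'|h' <;> rcases le_total a c with h''|h'' <;>
      simp [min_eq_left, min_eq_right, *, abs_of_nonpos, abs_of_nonneg] <;> linarith [abs_nonneg (b-c)]

lemma exists_lift_sq {p : ℝ} (hp : 0 < p) (f : ℝ × ℝ → AddCircle p)
    (hf : ContinuousOn f (Icc 0 1 ×ˢ Icc 0 1)) :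
    ∃ F : ℝ × ℝ → ℝ, ContinuousOn F (Icc 0 1 ×ˢ Icc 0 1) ∧
      ∀ z ∈ Icc (0:ℝ) 1 ×ˢ Icc (0:ℝ) 1, (F z : AddCircle p) = f z := by
  haveI : Fact (0 < p) := ⟨hp⟩
  set S : Set (ℝ × ℝ) := Icc 0 1 ×ˢ Icc 0 1 with hS
  have hScomp : IsCompact S := (isCompact_Icc).prod isCompact_Icc
  have hSclosed : IsClosed S := (isClosed_Icc).prod isClosed_Icc
  set bad : AddCircle p := ((-p/2 : ℝ) : AddCircle p) with hbad
  set ρ : AddCircle p → ℝ := fun z => ((AddCircle.equivIco p (-p/2) z : Ico (-p/2) (-p/2+p)) : ℝ)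
    with hρ
  have hρcoe : ∀ z, ((ρ z : ℝ) : AddCircle p) = z := fun z =>
    (AddCircle.equivIco p (-p/2)).symm_apply_apply z
  have hρcont : ∀ z : AddCircle p, z ≠ bad → ContinuousAt ρ z := fun z hz =>
    continuous_subtype_val.continuousAt.comp (AddCircle.continuousAt_equivIco p (-p/2) hz)
  have hbad0 : (0 : AddCircle p) ≠ bad := by
    rw [hbad, ne_comm, ne_eq, AddCircle.coe_eq_zero_iff]
    rintro ⟨n, hn⟩
    rw [zsmul_eq_mul] at hn
    have h1 : ((2*n+1 : ℤ) : ℝ) * p = 0 := by push_cast; linarith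
    have h2 : ((2*n+1 : ℤ) : ℝ) = 0 := by
      rcases mul_eq_zero.1 h1 with h|h
      · exact h
      · exact absurd h hp.ne'
    have : (2*n+1 : ℤ) = 0 := by exact_mod_cast h2
    omega
  -- uniform continuity-style bound
  obtain ⟨δ, hδ0, hδ⟩ : ∃ δ > 0, ∀ z ∈ S, ∀ w ∈ S, dist z w ≤ δ → f z - f w ≠ bad := by
    set g : (ℝ × ℝ) × (ℝ × ℝ) → AddCircle p := fun q => f q.1 - f q.2 with hg
    have hgc : ContinuousOn g (S ×ˢ S) :=
      (hf.comp continuousOn_fst (fun q hq => (mem_prod.1 hq).1)).sub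
        (hf.comp continuousOn_snd (fun q hq => (mem_prod.1 hq).2))
    set C : Set ((ℝ × ℝ) × (ℝ × ℝ)) := (S ×ˢ S) ∩ g ⁻¹' {bad} with hC
    have hCclosed : IsClosed C :=
      hgc.preimage_isClosed_of_isClosed (hSclosed.prod hSclosed) isClosed_singleton
    have hCcomp : IsCompact C :=
      (hScomp.prod hScomp).of_isClosed_subset hCclosed inter_subset_left
    rcases eq_empty_or_nonempty C with hCe | hCne
    · refine ⟨1, one_pos, fun z hz w hw _ hzw => ?_⟩
      have : ((z, w) : (ℝ×ℝ)×(ℝ×ℝ)) ∈ C := ⟨mem_prod.2 ⟨hz, hw⟩, hzw⟩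
      simp [hCe] at this
    · obtain ⟨q0, hq0C, hq0min⟩ := hCcomp.exists_isMinOn hCne
        (continuous_fst.dist continuous_snd).continuousOn
      have hq0 : q0.1 ≠ q0.2 := by
        intro h
        have : g q0 = bad := hq0C.2
        rw [hg] at this; simp only [h, sub_self] at this
        exact hbad0 this
      have hm0 : 0 < dist q0.1 q0.2 := dist_pos.2 hq0
      refine ⟨dist q0.1 q0.2 / 2, by linarith, fun z hz w hw hd hbadeq => ?_⟩
      have : ((z, w) : (ℝ×ℝ)×(ℝ×ℝ)) ∈ C := ⟨mem_prod.2 ⟨hz, hw⟩, hbadeq⟩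
      have := hq0min this
      simp only [dist] at this
      have : dist q0.1 q0.2 ≤ dist z w := this
      linarith
  obtain ⟨n, hn⟩ := exists_nat_gt (1/δ)
  have hn0 : 0 < (n:ℝ) := lt_trans (by positivity) hn
  have hnn : (n:ℝ) ≠ 0 := hn0.ne'
  set h : ℝ := 1 / n with hh
  have hh0 : 0 < h := by positivity
  have hhδ : h ≤ δ := by
    rw [hh, div_le_iff₀ hn0]
    rw [div_lt_iff₀ hδ0] at hn
    nlinarith
  -- the lift
  set F : ℝ × ℝ → ℝ := fun z =>
    ρ (f (0,0)) + (∑ j ∈ Finset.range n, ρ (f (0, min z.2 ((j+1)*h)) - f (0, min z.2 (j*h))))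
      + (∑ j ∈ Finset.range n, ρ (f (min z.1 ((j+1)*h), z.2) - f (min z.1 (j*h), z.2))) with hF
  have hmem : ∀ (x : ℝ), x ∈ Icc (0:ℝ) 1 → ∀ (c : ℝ), 0 ≤ c → c ≤ n → min x (c*h) ∈ Icc (0:ℝ) 1 := by
    intro x hx c hc hcn
    constructor
    · exact le_min hx.1 (by positivity)
    · exact le_trans (min_le_left _ _) hx.2
  have hdist : ∀ (x y : ℝ) (j : ℕ), dist (min x ((j+1)*h)) (min x (j*h)) ≤ δ := by
    intro x y j
    rw [Real.dist_eq]
    refine le_trans (abs_min_sub_min x _ _) (le_trans (le_of_eq ?_) hhδ)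
    rw [show ((j:ℝ)+1)*h - j*h = h by ring, abs_of_pos hh0]

  refine ⟨F, ?_, ?_⟩
  · -- continuity
    have key : ∀ (P Q : ℝ × ℝ → ℝ × ℝ), Continuous P → Continuous Q →
        (∀ z ∈ S, P z ∈ S) → (∀ z ∈ S, Q z ∈ S) → (∀ z ∈ S, dist (P z) (Q z) ≤ δ) →
        ContinuousOn (fun z => ρ (f (P z) - f (Q z))) S := by
      intro P Q hP hQ hPS hQS hPQ
      intro z hz
      have hinner : ContinuousWithinAt (fun z => f (P z) - f (Q z)) S z :=
        ((hf.comp hP.continuousOn (fun w hw => hPS w hw)).sub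
          (hf.comp hQ.continuousOn (fun w hw => hQS w hw))) z hz
      show ContinuousWithinAt (ρ ∘ (fun z => f (P z) - f (Q z))) S z
      exact ContinuousAt.comp_continuousWithinAt (x := z) (g := ρ)
        (f := fun z => f (P z) - f (Q z)) (s := S)
        (hρcont _ (hδ _ (hPS z hz) _ (hQS z hz) (hPQ z hz))) hinner
    rw [hF]
    apply ContinuousOn.add
    apply ContinuousOn.add
    · exact continuousOn_const
    · apply continuousOn_finset_sum
      intro j hj
      have hj1 : ((j:ℝ)+1) ≤ n := by exact_mod_cast Nat.succ_le_of_lt (Finset.mem_range.1 hj)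
      have hj2 : ((j:ℝ)) ≤ n := by exact_mod_cast le_of_lt (Finset.mem_range.1 hj)
      refine key (fun z => (0, min z.2 ((j+1)*h))) (fun z => (0, min z.2 (j*h)))
        (by fun_prop) (by fun_prop) ?_ ?_ ?_
      · intro z hz
        exact ⟨left_mem_Icc.2 zero_le_one, hmem _ hz.2 _ (by positivity) hj1⟩
      · intro z hz
        exact ⟨left_mem_Icc.2 zero_le_one, hmem _ hz.2 _ (by positivity) hj2⟩
      · intro z hz
        rw [Prod.dist_eq]
        simp only [dist_self]
        exact max_le (le_of_lt hδ0) (hdist z.2 z.2 j) |>.trans (le_refl _)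
    · apply continuousOn_finset_sum
      intro j hj
      have hj1 : ((j:ℝ)+1) ≤ n := by exact_mod_cast Nat.succ_le_of_lt (Finset.mem_range.1 hj)
      have hj2 : ((j:ℝ)) ≤ n := by exact_mod_cast le_of_lt (Finset.mem_range.1 hj)
      refine key (fun z => (min z.1 ((j+1)*h), z.2)) (fun z => (min z.1 (j*h), z.2))
        (by fun_prop) (by fun_prop) ?_ ?_ ?_
      · intro z hz
        exact ⟨hmem _ hz.1 _ (by positivity) hj1, hz.2⟩
      · intro z hz
        exact ⟨hmem _ hz.1 _ (by positivity) hj2, hz.2⟩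
      · intro z hz
        rw [Prod.dist_eq]
        simp only [dist_self]
        exact max_le (hdist z.1 z.1 j) (le_of_lt hδ0) |>.trans (le_refl _)
  · -- lift property
    intro z hz
    have hcoe : ((↑) : ℝ → AddCircle p) = (QuotientAddGroup.mk' (AddSubgroup.zmultiples p)) := rfl
    rw [hF]
    simp only
    rw [hcoe, map_add, map_add, map_sum, map_sum]
    rw [← hcoe]
    simp only [hρcoe]
    have hhn : (n:ℝ) * h = 1 := by rw [hh]; field_simp
    have hz1 := hz.1; have hz2 := hz.2
    have e1 : (∑ j ∈ Finset.range n, (f (0, min z.2 ((j+1)*h)) - f (0, min z.2 (j*h))))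
        = f (0, min z.2 (n*h)) - f (0, min z.2 ((0:ℕ)*h)) := by
      have := Finset.sum_range_sub (fun j : ℕ => f (0, min z.2 (j*h))) n
      rw [← this]
      apply Finset.sum_congr rfl
      intro j _
      push_cast
      ring_nf
    have e2 : (∑ j ∈ Finset.range n, (f (min z.1 ((j+1)*h), z.2) - f (min z.1 (j*h), z.2)))
        = f (min z.1 (n*h), z.2) - f (min z.1 ((0:ℕ)*h), z.2) := by
      have := Finset.sum_range_sub (fun j : ℕ => f (min z.1 (j*h), z.2)) n
      rw [← this]
      apply Finset.sum_congr rfl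
      intro j _
      push_cast
      ring_nf
    rw [e1, e2, hhn]
    rw [min_eq_left hz2.2, min_eq_left hz1.2]
    norm_num
    rw [min_eq_right hz2.1, min_eq_right hz1.1]
    abel_nf


lemma coe_eq_coe_addCircle {p x y : ℝ} (h : (x : AddCircle p) = (y : AddCircle p)) :
    ∃ n : ℤ, x = y + n * p := by
  have h2 : ((x - y : ℝ) : AddCircle p) = 0 := by
    have hcoe : ((↑) : ℝ → AddCircle p) = (QuotientAddGroup.mk' (AddSubgroup.zmultiples p)) := rfl
    rw [hcoe, map_sub, ← hcoe, h, sub_self]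
  rw [AddCircle.coe_eq_zero_iff] at h2
  obtain ⟨n, hn⟩ := h2
  rw [zsmul_eq_mul] at hn
  exact ⟨n, by linarith⟩

/-- decompose θ = x + k•2π with x ∈ [-π, π) -/
lemma exists_reduce (θ : ℝ) : ∃ (k : ℤ) (x : ℝ), θ = x + k * (2*π) ∧ -π ≤ x ∧ x < π := by
  set k := ⌊(θ + π)/(2*π)⌋ with hk
  have h2π : (0:ℝ) < 2*π := by positivity
  have hk1 : (k:ℝ) * (2*π) ≤ θ + π := by
    have := Int.floor_le ((θ + π)/(2*π))
    rwa [le_div_iff₀ h2π] at this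
  have hk2 : θ + π < (k:ℝ) * (2*π) + 2*π := by
    have := Int.lt_floor_add_one ((θ + π)/(2*π))
    rw [div_lt_iff₀ h2π] at this
    linarith
  exact ⟨k, θ - k*(2*π), by ring, by linarith, by linarith⟩

lemma band_of_sin_nonpos {θ : ℝ} (h : Real.sin θ ≤ 0) :
    ∃ k : ℤ, |θ - (-(π/2) + 2*π*k)| ≤ π/2 := by
  obtain ⟨k, x, hθ, hx1, hx2⟩ := exists_reduce θ
  have hsx : Real.sin x ≤ 0 := by
    rwa [hθ, Real.sin_add_int_mul_two_pi] at h
  have hx0 : x ≤ 0 := by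
    by_contra hc
    push_neg at hc
    exact absurd (Real.sin_pos_of_pos_of_lt_pi hc hx2) (by linarith)
  exact ⟨k, by rw [hθ, abs_le]; constructor <;> [linarith; linarith]⟩

lemma band_of_cos_nonneg {θ : ℝ} (h : Real.cos θ ≥ 0) :
    ∃ k : ℤ, |θ - (0 + 2*π*k)| ≤ π/2 := by
  obtain ⟨k, x, hθ, hx1, hx2⟩ := exists_reduce θ
  have hcx : Real.cos x ≥ 0 := by
    rwa [hθ, Real.cos_add_int_mul_two_pi] at h
  have hπ := Real.pi_pos
  have hx0 : -(π/2) ≤ x ∧ x ≤ π/2 := by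
    constructor
    · by_contra hc
      push_neg at hc
      have : Real.cos (-x) < 0 :=
        Real.cos_neg_of_pi_div_two_lt_of_lt (by linarith) (by linarith)
      rw [Real.cos_neg] at this
      linarith
    · by_contra hc
      push_neg at hc
      have : Real.cos x < 0 :=
        Real.cos_neg_of_pi_div_two_lt_of_lt (by linarith) (by linarith)
      linarith
  exact ⟨k, by rw [hθ, abs_le]; constructor <;> [linarith [hx0.1]; linarith [hx0.2]]⟩

lemma band_of_sin_nonneg {θ : ℝ} (h : Real.sin θ ≥ 0) :
    ∃ k : ℤ, |θ - (π/2 + 2*π*k)| ≤ π/2 := by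
  obtain ⟨k, hk⟩ := band_of_sin_nonpos (θ := -θ) (by rw [Real.sin_neg]; linarith)
  refine ⟨-k, ?_⟩
  rw [← abs_neg]
  convert hk using 2
  push_cast
  ring

lemma band_of_cos_nonpos {θ : ℝ} (h : Real.cos θ ≤ 0) :
    ∃ k : ℤ, |θ - (π + 2*π*k)| ≤ π/2 := by
  obtain ⟨k, hk⟩ := band_of_cos_nonneg (θ := θ + π) (by rw [Real.cos_add_pi]; linarith)
  refine ⟨k - 1, ?_⟩
  convert hk using 2
  push_cast
  ring

lemma band_lemma {g : ℝ → ℝ} {c : ℝ} (hg : ContinuousOn g (Icc 0 1))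
    (hband : ∀ v ∈ Icc (0:ℝ) 1, ∃ k : ℤ, |g v - (c + 2*π*k)| ≤ π/2) :
    ∃ k : ℤ, |g 0 - (c + 2*π*k)| ≤ π/2 ∧ |g 1 - (c + 2*π*k)| ≤ π/2 := by
  have hπ := Real.pi_pos
  have h01 : (0:ℝ) ∈ Icc (0:ℝ) 1 := by norm_num
  have h11 : (1:ℝ) ∈ Icc (0:ℝ) 1 := by norm_num
  obtain ⟨k₀, hk₀⟩ := hband 0 h01
  obtain ⟨k₁, hk₁⟩ := hband 1 h11
  have gapfree : ∀ V, (∃ j : ℤ, V = c + 2*π*j + π) → V ∈ g '' (Icc 0 1) → False := by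
    rintro V ⟨j, rfl⟩ ⟨v, hv, hgv⟩
    obtain ⟨k, hk⟩ := hband v hv
    rw [hgv] at hk
    rw [abs_le] at hk
    have h1 : -(π/2) ≤ 2*π*(j:ℝ) + π - 2*π*k := by linarith [hk.1]
    have h2 : 2*π*(j:ℝ) + π - 2*π*k ≤ π/2 := by linarith [hk.2]
    rcases le_or_gt k j with hjk | hjk
    · have : (k:ℝ) ≤ j := by exact_mod_cast hjk
      nlinarith
    · have : (j:ℝ) + 1 ≤ k := by exact_mod_cast hjk
      nlinarith
  rcases lt_trichotomy k₀ k₁ with hlt | heq | hgt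
  · exfalso
    have hc0 : (k₀:ℝ) + 1 ≤ k₁ := by exact_mod_cast hlt
    rw [abs_le] at hk₀ hk₁
    refine gapfree (c + 2*π*k₀ + π) ⟨k₀, rfl⟩ ?_
    apply intermediate_value_Icc zero_le_one hg
    constructor
    · linarith [hk₀.2]
    · nlinarith [hk₁.1]
  · exact ⟨k₀, hk₀, heq ▸ hk₁⟩
  · exfalso
    have hc0 : (k₁:ℝ) + 1 ≤ k₀ := by exact_mod_cast hgt
    rw [abs_le] at hk₀ hk₁
    refine gapfree (c + 2*π*k₁ + π) ⟨k₁, rfl⟩ ?_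
    apply intermediate_value_Icc' zero_le_one hg
    constructor
    · linarith [hk₁.2]
    · nlinarith [hk₀.1]

section refine
variable {θ : ℝ} {k : ℤ}

private lemma reduce_eq (θ : ℝ) (k : ℤ) : θ = (θ - k*(2*π)) + k * (2*π) := by ring

lemma refine_R1 (hb : |θ - (-(π/2) + 2*π*k)| ≤ π/2) (hc : Real.cos θ ≤ 0) :
    2*π*k - π ≤ θ ∧ θ ≤ 2*π*k - π/2 := by
  rw [abs_le] at hb
  refine ⟨by linarith [hb.1], ?_⟩
  by_contra hcon
  push_neg at hcon
  have hπ := Real.pi_pos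
  have hx : Real.cos (θ - k*(2*π)) = Real.cos θ := by
    conv_rhs => rw [reduce_eq θ k]
    rw [Real.cos_add_int_mul_two_pi]
  have : 0 < Real.cos (θ - k*(2*π)) :=
    Real.cos_pos_of_mem_Ioo ⟨by linarith, by linarith [hb.2]⟩
  linarith [hx ▸ this]

lemma refine_R2 (hb : |θ - (-(π/2) + 2*π*k)| ≤ π/2) (hc : 0 ≤ Real.cos θ) :
    2*π*k - π/2 ≤ θ ∧ θ ≤ 2*π*k := by
  rw [abs_le] at hb
  refine ⟨?_, by linarith [hb.2]⟩
  by_contra hcon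
  push_neg at hcon
  have hπ := Real.pi_pos
  have hx : Real.cos (θ - k*(2*π)) = Real.cos θ := by
    conv_rhs => rw [reduce_eq θ k]
    rw [Real.cos_add_int_mul_two_pi]
  have : Real.cos (-(θ - k*(2*π))) < 0 :=
    Real.cos_neg_of_pi_div_two_lt_of_lt (by linarith) (by linarith [hb.1])
  rw [Real.cos_neg, hx] at this
  linarith

lemma refine_R3 (hb : |θ - (0 + 2*π*k)| ≤ π/2) (hc : Real.sin θ ≤ 0) :
    2*π*k - π/2 ≤ θ ∧ θ ≤ 2*π*k := by
  rw [abs_le] at hb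
  refine ⟨by linarith [hb.1], ?_⟩
  by_contra hcon
  push_neg at hcon
  have hπ := Real.pi_pos
  have hx : Real.sin (θ - k*(2*π)) = Real.sin θ := by
    conv_rhs => rw [reduce_eq θ k]
    rw [Real.sin_add_int_mul_two_pi]
  have : 0 < Real.sin (θ - k*(2*π)) :=
    Real.sin_pos_of_pos_of_lt_pi (by linarith) (by linarith [hb.2])
  linarith [hx ▸ this]

lemma refine_R4 (hb : |θ - (0 + 2*π*k)| ≤ π/2) (hc : 0 ≤ Real.sin θ) :
    2*π*k ≤ θ ∧ θ ≤ 2*π*k + π/2 := by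
  rw [abs_le] at hb
  refine ⟨?_, by linarith [hb.2]⟩
  by_contra hcon
  push_neg at hcon
  have hπ := Real.pi_pos
  have hx : Real.sin (θ - k*(2*π)) = Real.sin θ := by
    conv_rhs => rw [reduce_eq θ k]
    rw [Real.sin_add_int_mul_two_pi]
  have : 0 < Real.sin (-(θ - k*(2*π))) :=
    Real.sin_pos_of_pos_of_lt_pi (by linarith) (by linarith [hb.1])
  rw [Real.sin_neg, hx] at this
  linarith

lemma refine_R5 (hb : |θ - (π/2 + 2*π*k)| ≤ π/2) (hc : 0 ≤ Real.cos θ) :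
    2*π*k ≤ θ ∧ θ ≤ 2*π*k + π/2 := by
  rw [abs_le] at hb
  refine ⟨by linarith [hb.1], ?_⟩
  by_contra hcon
  push_neg at hcon
  have hπ := Real.pi_pos
  have hx : Real.cos (θ - k*(2*π)) = Real.cos θ := by
    conv_rhs => rw [reduce_eq θ k]
    rw [Real.cos_add_int_mul_two_pi]
  have : Real.cos (θ - k*(2*π)) < 0 :=
    Real.cos_neg_of_pi_div_two_lt_of_lt (by linarith) (by linarith [hb.2])
  linarith [hx ▸ this]

lemma refine_R6 (hb : |θ - (π/2 + 2*π*k)| ≤ π/2) (hc : Real.cos θ ≤ 0) :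
    2*π*k + π/2 ≤ θ ∧ θ ≤ 2*π*k + π := by
  rw [abs_le] at hb
  refine ⟨?_, by linarith [hb.2]⟩
  by_contra hcon
  push_neg at hcon
  have hπ := Real.pi_pos
  have hx : Real.cos (θ - k*(2*π)) = Real.cos θ := by
    conv_rhs => rw [reduce_eq θ k]
    rw [Real.cos_add_int_mul_two_pi]
  have : 0 < Real.cos (θ - k*(2*π)) :=
    Real.cos_pos_of_mem_Ioo ⟨by linarith [hb.1], by linarith⟩
  linarith [hx ▸ this]

lemma refine_R7 (hb : |θ - (π + 2*π*k)| ≤ π/2) (hc : 0 ≤ Real.sin θ) :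
    2*π*k + π/2 ≤ θ ∧ θ ≤ 2*π*k + π := by
  rw [abs_le] at hb
  refine ⟨by linarith [hb.1], ?_⟩
  by_contra hcon
  push_neg at hcon
  have hπ := Real.pi_pos
  have hx : Real.sin (θ - k*(2*π)) = Real.sin θ := by
    conv_rhs => rw [reduce_eq θ k]
    rw [Real.sin_add_int_mul_two_pi]
  have h7 : 0 < Real.sin ((θ - k*(2*π)) - π) := by
    apply Real.sin_pos_of_pos_of_lt_pi (by linarith) (by linarith [hb.2])
  rw [Real.sin_sub_pi, hx] at h7
  linarith

lemma refine_R8 (hb : |θ - (π + 2*π*k)| ≤ π/2) (hc : Real.sin θ ≤ 0) :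
    2*π*k + π ≤ θ ∧ θ ≤ 2*π*k + 3*π/2 := by
  rw [abs_le] at hb
  refine ⟨?_, by linarith [hb.2]⟩
  by_contra hcon
  push_neg at hcon
  have hπ := Real.pi_pos
  have hx : Real.sin (θ - k*(2*π)) = Real.sin θ := by
    conv_rhs => rw [reduce_eq θ k]
    rw [Real.sin_add_int_mul_two_pi]
  have : 0 < Real.sin (θ - k*(2*π)) :=
    Real.sin_pos_of_pos_of_lt_pi (by linarith [hb.1]) (by linarith)
  linarith [hx ▸ this]

end refine

lemma int_eq_of_close {a b : ℤ} (h1 : 2*π*a ≤ 2*π*b + π/2) (h2 : 2*π*b ≤ 2*π*a + π/2) :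
    a = b := by
  have hπ := Real.pi_pos
  rcases lt_trichotomy a b with h | h | h
  · exfalso
    have : (a:ℝ) + 1 ≤ b := by exact_mod_cast h
    nlinarith
  · exact h
  · exfalso
    have : (b:ℝ) + 1 ≤ a := by exact_mod_cast h
    nlinarith

lemma crossing_lemma {a₁ a₂ b₁ b₂ : ℝ} {α β : ℝ → ℝ × ℝ}
    (hα : ContinuousOn α (Icc 0 1)) (hβ : ContinuousOn β (Icc 0 1))
    (hαR : ∀ u ∈ Icc (0:ℝ) 1, α u ∈ Icc a₁ a₂ ×ˢ Icc b₁ b₂)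
    (hβR : ∀ v ∈ Icc (0:ℝ) 1, β v ∈ Icc a₁ a₂ ×ˢ Icc b₁ b₂)
    (hα0 : (α 0).1 = a₁) (hα1 : (α 1).1 = a₂) (hβ0 : (β 0).2 = b₂) (hβ1 : (β 1).2 = b₁) :
    ∃ u ∈ Icc (0:ℝ) 1, ∃ v ∈ Icc (0:ℝ) 1, α u = β v := by
  by_contra hcon
  push_neg at hcon
  have hπ := Real.pi_pos
  set S : Set (ℝ × ℝ) := Icc 0 1 ×ˢ Icc 0 1 with hS
  set X : ℝ × ℝ → ℝ := fun z => (α z.1).1 - (β z.2).1 with hX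
  set Y : ℝ × ℝ → ℝ := fun z => (α z.1).2 - (β z.2).2 with hY
  set C : ℝ × ℝ → ℂ := fun z => (X z : ℂ) + (Y z : ℂ) * Complex.I with hC
  have hCre : ∀ z, (C z).re = X z := by intro z; simp [hC]
  have hCim : ∀ z, (C z).im = Y z := by intro z; simp [hC]
  have hαS : ContinuousOn (fun z : ℝ × ℝ => α z.1) S :=
    hα.comp continuousOn_fst (fun z hz => hz.1)
  have hβS : ContinuousOn (fun z : ℝ × ℝ => β z.2) S :=
    hβ.comp continuousOn_snd (fun z hz => hz.2)
  have hXc : ContinuousOn X S :=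
    (continuous_fst.comp_continuousOn hαS).sub (continuous_fst.comp_continuousOn hβS)
  have hYc : ContinuousOn Y S :=
    (continuous_snd.comp_continuousOn hαS).sub (continuous_snd.comp_continuousOn hβS)
  have hCc : ContinuousOn C S :=
    (Complex.continuous_ofReal.comp_continuousOn hXc).add
      ((Complex.continuous_ofReal.comp_continuousOn hYc).mul continuousOn_const)
  have hC0 : ∀ z ∈ S, C z ≠ 0 := by
    intro z hz h0
    apply hcon z.1 hz.1 z.2 hz.2
    have hre : X z = 0 := by rw [← hCre z, h0]; simp
    have him : Y z = 0 := by rw [← hCim z, h0]; simp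
    exact Prod.ext (sub_eq_zero.1 hre) (sub_eq_zero.1 him)
  set f : ℝ × ℝ → AddCircle (2*π) := fun z => ((Complex.arg (C z) : ℝ) : AddCircle (2*π)) with hf
  have hfc : ContinuousOn f S := by
    intro z hz
    exact (Complex.continuousAt_arg_coe_angle (hC0 z hz)).comp_continuousWithinAt (hCc z hz)
  obtain ⟨Θ, hΘc, hΘ⟩ := exists_lift_sq Real.two_pi_pos f hfc
  have hsin : ∀ z ∈ S, Real.sin (Θ z) = Y z / ‖C z‖ := by
    intro z hz
    obtain ⟨n, hn⟩ := coe_eq_coe_addCircle (hΘ z hz)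
    rw [hn, ← hCim z]
    rw [Real.sin_add_int_mul_two_pi, Complex.sin_arg]
  have hcos : ∀ z ∈ S, Real.cos (Θ z) = X z / ‖C z‖ := by
    intro z hz
    obtain ⟨n, hn⟩ := coe_eq_coe_addCircle (hΘ z hz)
    rw [hn, ← hCre z]
    rw [Real.cos_add_int_mul_two_pi, Complex.cos_arg (hC0 z hz)]
  -- sign conditions on edges
  have habs : ∀ z, 0 ≤ ‖C z‖ := fun z => norm_nonneg _
  have hbot : ∀ u ∈ Icc (0:ℝ) 1, Real.sin (Θ (u, 0)) ≤ 0 := by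
    intro u hu
    have hz : ((u, 0) : ℝ × ℝ) ∈ S := ⟨hu, left_mem_Icc.2 zero_le_one⟩
    rw [hsin _ hz]
    apply div_nonpos_iff.2
    refine Or.inr ⟨?_, habs _⟩
    have := (hαR u hu).2.2
    simp only [hY]
    rw [hβ0]
    linarith
  have htop : ∀ u ∈ Icc (0:ℝ) 1, 0 ≤ Real.sin (Θ (u, 1)) := by
    intro u hu
    have hz : ((u, 1) : ℝ × ℝ) ∈ S := ⟨hu, right_mem_Icc.2 zero_le_one⟩
    rw [hsin _ hz]
    apply div_nonneg _ (habs _)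
    have := (hαR u hu).2.1
    simp only [hY]
    rw [hβ1]
    linarith
  have hleft : ∀ v ∈ Icc (0:ℝ) 1, Real.cos (Θ (0, v)) ≤ 0 := by
    intro v hv
    have hz : ((0, v) : ℝ × ℝ) ∈ S := ⟨left_mem_Icc.2 zero_le_one, hv⟩
    rw [hcos _ hz]
    apply div_nonpos_iff.2
    refine Or.inr ⟨?_, habs _⟩
    have := (hβR v hv).1.1
    simp only [hX]
    rw [hα0]
    linarith
  have hright : ∀ v ∈ Icc (0:ℝ) 1, 0 ≤ Real.cos (Θ (1, v)) := by
    intro v hv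
    have hz : ((1, v) : ℝ × ℝ) ∈ S := ⟨right_mem_Icc.2 zero_le_one, hv⟩
    rw [hcos _ hz]
    apply div_nonneg _ (habs _)
    have := (hβR v hv).1.2
    simp only [hX]
    rw [hα1]
    linarith
  -- memberships
  have h0m : (0:ℝ) ∈ Icc (0:ℝ) 1 := left_mem_Icc.2 zero_le_one
  have h1m : (1:ℝ) ∈ Icc (0:ℝ) 1 := right_mem_Icc.2 zero_le_one
  -- band on each edge
  obtain ⟨k₁, hk₁0, hk₁1⟩ := band_lemma (g := fun u => Θ (u, 0)) (c := -(π/2))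
    (hΘc.comp (Continuous.continuousOn (by fun_prop)) (fun u hu => ⟨hu, h0m⟩))
    (fun u hu => band_of_sin_nonpos (hbot u hu))
  obtain ⟨k₂, hk₂0, hk₂1⟩ := band_lemma (g := fun v => Θ (1, v)) (c := 0)
    (hΘc.comp (Continuous.continuousOn (by fun_prop)) (fun v hv => ⟨h1m, hv⟩))
    (fun v hv => band_of_cos_nonneg (hright v hv))
  obtain ⟨k₃, hk₃0, hk₃1⟩ := band_lemma (g := fun u => Θ (u, 1)) (c := π/2)
    (hΘc.comp (Continuous.continuousOn (by fun_prop)) (fun u hu => ⟨hu, h1m⟩))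
    (fun u hu => band_of_sin_nonneg (htop u hu))
  obtain ⟨k₄, hk₄0, hk₄1⟩ := band_lemma (g := fun v => Θ (0, v)) (c := π)
    (hΘc.comp (Continuous.continuousOn (by fun_prop)) (fun v hv => ⟨h0m, hv⟩))
    (fun v hv => band_of_cos_nonpos (hleft v hv))
  -- corner refinements
  have c00a := refine_R1 hk₁0 (hleft 0 h0m)
  have c10a := refine_R2 hk₁1 (hright 0 h0m)
  have c10b := refine_R3 hk₂0 (hbot 1 h1m)
  have c11a := refine_R4 hk₂1 (htop 1 h1m)
  have c11b := refine_R5 hk₃1 (hright 1 h1m)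
  have c01a := refine_R6 hk₃0 (hleft 1 h1m)
  have c01b := refine_R7 hk₄1 (htop 0 h0m)
  have c00b := refine_R8 hk₄0 (hbot 0 h0m)
  have e12 : k₁ = k₂ := int_eq_of_close (by linarith [c10a.1, c10b.2]) (by linarith [c10b.1, c10a.2])
  have e23 : k₂ = k₃ := int_eq_of_close (by linarith [c11a.1, c11b.2]) (by linarith [c11b.1, c11a.2])
  have e34 : k₃ = k₄ := int_eq_of_close (by linarith [c01a.1, c01b.2]) (by linarith [c01b.1, c01a.2])
  have hfinal1 : Θ (0, 0) ≤ 2*π*k₁ - π/2 := c00a.2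
  have hfinal2 : 2*π*k₄ + π ≤ Θ (0, 0) := c00b.1
  rw [← e34, ← e23, ← e12] at hfinal2
  linarith

lemma exists_lift_interval {p : ℝ} (hp : 0 < p) (f : ℝ → AddCircle p)
    (hf : ContinuousOn f (Icc 0 1)) :
    ∃ F : ℝ → ℝ, ContinuousOn F (Icc 0 1) ∧ ∀ x ∈ Icc (0:ℝ) 1, (F x : AddCircle p) = f x := by
  obtain ⟨F, hFc, hFe⟩ := exists_lift_sq hp (fun z => f z.1)
    (hf.comp continuousOn_fst (fun z hz => hz.1))
  refine ⟨fun x => F (x, 0), ?_, ?_⟩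
  · exact hFc.comp (Continuous.continuousOn (by fun_prop))
      (fun x hx => ⟨hx, left_mem_Icc.2 zero_le_one⟩)
  · intro x hx
    exact hFe (x, 0) ⟨hx, left_mem_Icc.2 zero_le_one⟩

lemma window {g : ℝ → ℝ} (hg : Continuous g) {u v P Q : ℝ} (huv : u ≤ v)
    (hP : g u = P) (hQ : g v = Q) (hPQ : P < Q) :
    ∃ τ₁ τ₂, τ₁ ≤ τ₂ ∧ g τ₁ = P ∧ g τ₂ = Q ∧ ∀ t ∈ Icc τ₁ τ₂, g t ∈ Icc P Q := by
  set S2 : Set ℝ := Icc u v ∩ g ⁻¹' {Q} with hS2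
  have hS2ne : S2.Nonempty := ⟨v, ⟨right_mem_Icc.2 huv, hQ⟩⟩
  have hS2cl : IsClosed S2 := isClosed_Icc.inter (isClosed_singleton.preimage hg)
  have hS2bdd : BddBelow S2 := (bddBelow_Icc : BddBelow (Icc u v)).mono inter_subset_left
  set τ₂ := sInf S2 with hτ₂def
  have hτ₂mem : τ₂ ∈ S2 := hS2cl.csInf_mem hS2ne hS2bdd
  have hτ₂Q : g τ₂ = Q := hτ₂mem.2
  have huτ₂ : u ≤ τ₂ := hτ₂mem.1.1
  have hτ₂v : τ₂ ≤ v := hτ₂mem.1.2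
  set S1 : Set ℝ := Icc u τ₂ ∩ g ⁻¹' {P} with hS1
  have hS1ne : S1.Nonempty := ⟨u, ⟨left_mem_Icc.2 huτ₂, hP⟩⟩
  have hS1cl : IsClosed S1 := isClosed_Icc.inter (isClosed_singleton.preimage hg)
  have hS1bdd : BddAbove S1 := (bddAbove_Icc (a := u) (b := τ₂)).mono inter_subset_left
  set τ₁ := sSup S1 with hτ₁def
  have hτ₁mem : τ₁ ∈ S1 := hS1cl.csSup_mem hS1ne hS1bdd
  have hτ₁P : g τ₁ = P := hτ₁mem.2
  have huτ₁ : u ≤ τ₁ := hτ₁mem.1.1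
  have hτ₁τ₂ : τ₁ ≤ τ₂ := hτ₁mem.1.2
  refine ⟨τ₁, τ₂, hτ₁τ₂, hτ₁P, hτ₂Q, ?_⟩
  intro t ht
  constructor
  · by_contra hc
    push_neg at hc
    have hPmem : P ∈ Icc (g t) (g τ₂) := ⟨hc.le, by rw [hτ₂Q]; exact hPQ.le⟩
    obtain ⟨t', ht', hgt'⟩ := intermediate_value_Icc ht.2 hg.continuousOn hPmem
    have ht'S1 : t' ∈ S1 := ⟨⟨le_trans huτ₁ (le_trans ht.1 ht'.1), ht'.2⟩, hgt'⟩
    have : t' ≤ τ₁ := le_csSup hS1bdd ht'S1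
    have : t = τ₁ := le_antisymm (by linarith [ht'.1]) ht.1
    rw [this, hτ₁P] at hc
    exact lt_irrefl P hc
  · by_contra hc
    push_neg at hc
    have hQmem : Q ∈ Icc (g τ₁) (g t) := ⟨by rw [hτ₁P]; exact hPQ.le, hc.le⟩
    obtain ⟨t', ht', hgt'⟩ := intermediate_value_Icc ht.1 hg.continuousOn hQmem
    have ht'S2 : t' ∈ S2 := ⟨⟨le_trans huτ₁ ht'.1, le_trans ht'.2 (le_trans ht.2 hτ₂v)⟩, hgt'⟩
    have : τ₂ ≤ t' := csInf_le hS2bdd ht'S2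
    have : t = τ₂ := le_antisymm ht.2 (by linarith [ht'.2])
    rw [this, hτ₂Q] at hc
    exact lt_irrefl Q hc

lemma window' {g : ℝ → ℝ} (hg : Continuous g) {u v P Q : ℝ} (huv : u ≤ v)
    (hP : g u = P) (hQ : g v = Q) (hQP : Q < P) :
    ∃ τ₁ τ₂, τ₁ ≤ τ₂ ∧ g τ₁ = P ∧ g τ₂ = Q ∧ ∀ t ∈ Icc τ₁ τ₂, g t ∈ Icc Q P := by
  obtain ⟨τ₁, τ₂, h12, h1, h2, hrange⟩ := window (g := fun t => -g t) (hg.neg) huv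
    (show -g u = -P by rw [hP]) (show -g v = -Q by rw [hQ]) (by linarith)
  have h1' : g τ₁ = P := by have : -g τ₁ = -P := h1; linarith
  have h2' : g τ₂ = Q := by have : -g τ₂ = -Q := h2; linarith
  refine ⟨τ₁, τ₂, h12, h1', h2', ?_⟩
  intro t ht
  have h3 := hrange t ht
  have ha : -P ≤ -g t := h3.1
  have hb : -g t ≤ -Q := h3.2
  exact ⟨by linarith, by linarith⟩


set_option maxHeartbeats 1000000 in
/-- On the cylinder `C = (ℝ/ℤ) × ℝ`, a closed curve `γ` that is not null-homotopic meets
every rotation `γ_l : t ↦ γ(t) + (l,0)` of itself: `Im(γ) ∩ Im(γ_l) ≠ ∅`. -/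
theorem rotated_curve_intersects
    (γ : C(AddCircle (1 : ℝ), AddCircle (1 : ℝ) × ℝ))
    (hγ : ∀ c : AddCircle (1 : ℝ) × ℝ,
      ¬ ContinuousMap.Homotopic γ (ContinuousMap.const _ c)) :
    ∀ l : AddCircle (1 : ℝ),
      (Set.range γ ∩ Set.range (fun t => γ t + ((l, 0) : AddCircle (1 : ℝ) × ℝ))).Nonempty := by
  intro l
  by_contra hne
  have hdisj : ∀ z w : AddCircle (1:ℝ), γ z ≠ γ w + (l, 0) := by
    intro z w heq
    exact hne ⟨γ z, ⟨z, rfl⟩, ⟨w, heq.symm⟩⟩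
  haveI : Fact ((0:ℝ) < 1) := ⟨one_pos⟩
  have hec : Continuous ((↑) : ℝ → AddCircle (1:ℝ)) := AddCircle.continuous_mk' 1
  set a : ℝ → AddCircle (1:ℝ) := fun t => (γ (t : AddCircle (1:ℝ))).1 with ha
  set b : ℝ → ℝ := fun t => (γ (t : AddCircle (1:ℝ))).2 with hb
  have hac : Continuous a := continuous_fst.comp (γ.continuous.comp hec)
  have hbc : Continuous b := continuous_snd.comp (γ.continuous.comp hec)
  have hintzero : ∀ k : ℤ, ((k : ℝ) : AddCircle (1:ℝ)) = 0 := by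
    intro k
    rw [AddCircle.coe_eq_zero_iff]
    exact ⟨k, by simp [zsmul_eq_mul]⟩
  have hfracteq : ∀ t : ℝ, ((Int.fract t : ℝ) : AddCircle (1:ℝ)) = (t : AddCircle (1:ℝ)) := by
    intro t
    have ht : Int.fract t = t - ((⌊t⌋ : ℤ) : ℝ) := rfl
    rw [ht, AddCircle.coe_sub, hintzero ⌊t⌋, sub_zero]
  have h0mem : (0:ℝ) ∈ Icc (0:ℝ) 1 := left_mem_Icc.2 zero_le_one
  have h1mem : (1:ℝ) ∈ Icc (0:ℝ) 1 := right_mem_Icc.2 zero_le_one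
  obtain ⟨A₀, hA₀c, hA₀e⟩ := exists_lift_interval one_pos a hac.continuousOn
  have hcoe1 : ((↑) : ℝ → AddCircle (1:ℝ))
      = ⇑(QuotientAddGroup.mk' (AddSubgroup.zmultiples (1:ℝ))) := rfl
  have e10 : ((1:ℝ) : AddCircle (1:ℝ)) = ((0:ℝ) : AddCircle (1:ℝ)) := by
    rw [AddCircle.coe_period, hcoe1, map_zero]
  have h10 : a 1 = a 0 := by
    rw [ha]
    exact congrArg (fun z => (γ z).1) e10
  obtain ⟨d, hd⟩ := coe_eq_coe_addCircle (p := (1:ℝ)) (x := A₀ 1) (y := A₀ 0)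
    (by rw [hA₀e 1 h1mem, hA₀e 0 h0mem, h10])
  rw [mul_one] at hd
  set g0 : ℝ → ℝ := fun x => A₀ x - d * x with hg0
  have hg0c : ContinuousOn g0 (Icc 0 1) := hA₀c.sub (Continuous.continuousOn (by fun_prop))
  have hg001 : g0 0 = g0 1 := by rw [hg0]; simp only; rw [hd]; ring
  have hg0f : Continuous (g0 ∘ Int.fract) := ContinuousOn.comp_fract'' hg0c hg001
  set Ab : ℝ → ℝ := fun t => g0 (Int.fract t) + d * t with hAb
  have hAbc : Continuous Ab := hg0f.add (by fun_prop)
  have hAbe : ∀ t : ℝ, ((Ab t : ℝ) : AddCircle (1:ℝ)) = a t := by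
    intro t
    have h1 : Ab t = A₀ (Int.fract t) + (d : ℝ) * ((⌊t⌋ : ℤ) : ℝ) := by
      rw [hAb]
      simp only [hg0]
      have hft : Int.fract t = t - ((⌊t⌋ : ℤ) : ℝ) := rfl
      rw [hft]
      push_cast
      ring
    have h2 : (((d : ℝ) * ((⌊t⌋ : ℤ) : ℝ)) : AddCircle (1:ℝ)) = 0 := by
      have he : (d:ℝ) * ((⌊t⌋:ℤ):ℝ) = (((d * ⌊t⌋ : ℤ)) : ℝ) := by push_cast; ring
      rw [he]
      exact hintzero _
    rw [h1, AddCircle.coe_add, h2, add_zero,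
      hA₀e _ ⟨Int.fract_nonneg t, (Int.fract_lt_one t).le⟩]
    rw [ha]
    exact congrArg (fun z => (γ z).1) (hfracteq t)
  have hAbint : ∀ k : ℤ, Ab ((k:ℤ) : ℝ) = A₀ 0 + d * k := by
    intro k
    rw [hAb]
    simp only [Int.fract_intCast, hg0]
    ring
  have hbfr : ∀ t : ℝ, b (Int.fract t) = b t := by
    intro t
    rw [hb]
    exact congrArg (fun z => (γ z).2) (hfracteq t)
  rcases eq_or_ne d 0 with hd0 | hd0
  · -- d = 0 : γ is nullhomotopic, contradiction with hγ
    set F2 : ℝ → ℝ × ℝ := fun t => (Ab t, b t) with hF2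
    have hb01 : b 0 = b 1 := by
      have := hbfr 1
      rw [Int.fract_one] at this
      exact this
    have hA01 : Ab 0 = Ab 1 := by
      have e0 := hAbint 0
      have e1 := hAbint 1
      push_cast at e0 e1
      rw [e0, e1, hd0]
      push_cast
      ring
    have hper : F2 0 = F2 (0 + 1) := by
      rw [hF2]
      simp only [zero_add]
      exact Prod.ext hA01 hb01
    have hcont2 : ContinuousOn F2 (Icc 0 (0+1)) := (hAbc.prodMk hbc).continuousOn
    set Γh := AddCircle.liftIco 1 0 F2 with hΓh
    have hΓhc : Continuous Γh := AddCircle.liftIco_continuous hper hcont2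
    have hΓγ : ∀ z : AddCircle (1:ℝ), ((((Γh z).1 : ℝ) : AddCircle (1:ℝ)), (Γh z).2) = γ z := by
      intro z
      obtain ⟨x, hx, rfl⟩ := AddCircle.eq_coe_Ico z
      have hx' : x ∈ Ico (0:ℝ) (0 + 1) := by rwa [zero_add]
      rw [hΓh, AddCircle.liftIco_coe_apply hx']
      show (((Ab x : ℝ) : AddCircle (1:ℝ)), b x) = γ ↑x
      rw [hAbe x]
    set q : C(ℝ × ℝ, AddCircle (1:ℝ) × ℝ) :=
      ⟨fun w => ((w.1 : AddCircle (1:ℝ)), w.2),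
        (hec.comp continuous_fst).prodMk continuous_snd⟩ with hq
    set G : C(AddCircle (1:ℝ), ℝ × ℝ) := ⟨Γh, hΓhc⟩ with hG
    have hγeq : γ = q.comp G := by
      apply ContinuousMap.ext
      intro z
      exact (hΓγ z).symm
    have hnullG : ContinuousMap.Nullhomotopic G := by
      have h1 := id_nullhomotopic (ℝ × ℝ)
      have h2 := h1.comp_left G
      rwa [ContinuousMap.id_comp] at h2
    obtain ⟨c, hc⟩ := hnullG.comp_right q
    rw [← hγeq] at hc
    exact hγ c hc
  · -- d ≠ 0
    obtain ⟨lam, rfl⟩ := QuotientAddGroup.mk_surjective l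
    have hkey : ∀ s t : ℝ, Ab s = Ab t + lam → b s ≠ b t := by
      intro s t h1 h2
      apply hdisj (s : AddCircle (1:ℝ)) (t : AddCircle (1:ℝ))
      have hfst : (γ (s : AddCircle (1:ℝ))).1 = (γ (t : AddCircle (1:ℝ))).1 + (lam : AddCircle (1:ℝ)) := by
        show a s = a t + (lam : AddCircle (1:ℝ))
        rw [← hAbe s, ← hAbe t, h1, AddCircle.coe_add]
      apply Prod.ext
      · rw [Prod.fst_add]
        exact hfst
      · rw [Prod.snd_add]
        show b s = b t + 0
        rw [add_zero]
        exact h2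
    obtain ⟨t₀, ht₀I, ht₀max⟩ :=
      isCompact_Icc.exists_isMaxOn (nonempty_Icc.2 zero_le_one) hbc.continuousOn
    obtain ⟨t₁, ht₁I, ht₁min⟩ :=
      isCompact_Icc.exists_isMinOn (nonempty_Icc.2 zero_le_one) hbc.continuousOn
    have hM : ∀ s : ℝ, b s ≤ b t₀ := fun s => by
      rw [← hbfr s]
      exact (isMaxOn_iff.1 ht₀max) _ ⟨Int.fract_nonneg s, (Int.fract_lt_one s).le⟩
    have hm' : ∀ s : ℝ, b t₁ ≤ b s := fun s => by
      rw [← hbfr s]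
      exact (isMinOn_iff.1 ht₁min) _ ⟨Int.fract_nonneg s, (Int.fract_lt_one s).le⟩
    have habsd : (1:ℝ) ≤ |(d:ℝ)| := by
      have : (1:ℤ) ≤ |d| := Int.one_le_abs (by exact_mod_cast hd0)
      calc (1:ℝ) ≤ ((|d| : ℤ) : ℝ) := by exact_mod_cast this
      _ = |(d:ℝ)| := by push_cast; ring
    have hd2 : (1:ℝ) ≤ (d:ℝ)^2 := by nlinarith [sq_abs (d:ℝ)]
    have hsurj : ∀ c : ℝ, ∃ s : ℝ, Ab s = c := by
      intro c
      obtain ⟨N, hN⟩ := exists_nat_ge (|c - A₀ 0|)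
      have hN0 : (0:ℝ) ≤ N := Nat.cast_nonneg N
      have hup : c ≤ Ab (((N:ℤ)*d : ℤ) : ℝ) := by
        rw [hAbint]
        push_cast
        nlinarith [le_abs_self (c - A₀ 0)]
      have hdown : Ab ((-(N:ℤ)*d : ℤ) : ℝ) ≤ c := by
        rw [hAbint]
        push_cast
        nlinarith [neg_abs_le (c - A₀ 0)]
      have hcmem : c ∈ uIcc (Ab ((-(N:ℤ)*d : ℤ) : ℝ)) (Ab (((N:ℤ)*d : ℤ) : ℝ)) :=
        mem_uIcc.2 (Or.inl ⟨hdown, hup⟩)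
      obtain ⟨s, _, hs⟩ := intermediate_value_uIcc hAbc.continuousOn hcmem
      exact ⟨s, hs⟩
    obtain ⟨wU, hwUI, hwUmax⟩ :=
      isCompact_Icc.exists_isMaxOn (nonempty_Icc.2 zero_le_one) hAbc.continuousOn
    obtain ⟨wL, hwLI, hwLmin⟩ :=
      isCompact_Icc.exists_isMinOn (nonempty_Icc.2 zero_le_one) hAbc.continuousOn
    set xm : ℝ := Ab wL + lam - 1 with hxm
    set xp : ℝ := Ab wU + lam + 1 with hxp
    have hxmp : xm < xp := by
      have : Ab wL ≤ Ab wU := (isMaxOn_iff.1 hwUmax) _ hwLI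
      rw [hxm, hxp]
      linarith
    have hβx : ∀ w ∈ Icc (0:ℝ) 1, Ab w + lam ∈ Icc xm xp := by
      intro w hw
      constructor
      · have := (isMinOn_iff.1 hwLmin) _ hw
        rw [hxm]; linarith
      · have := (isMaxOn_iff.1 hwUmax) _ hw
        rw [hxp]; linarith
    have main : ∀ τ₁ τ₂ : ℝ, τ₁ ≤ τ₂ → (∀ t ∈ Icc τ₁ τ₂, Ab t ∈ Icc xm xp) →
        ((Ab τ₁ = xm ∧ Ab τ₂ = xp) ∨ (Ab τ₁ = xp ∧ Ab τ₂ = xm)) → False := by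
      intro τ₁ τ₂ h12 hwin hor
      set ℓ : ℝ → ℝ := fun u => τ₁ + u * (τ₂ - τ₁) with hℓ
      have hℓmem : ∀ u ∈ Icc (0:ℝ) 1, ℓ u ∈ Icc τ₁ τ₂ := by
        intro u hu
        constructor
        · show τ₁ ≤ τ₁ + u * (τ₂ - τ₁); nlinarith [hu.1, hu.2]
        · show τ₁ + u * (τ₂ - τ₁) ≤ τ₂; nlinarith [hu.1, hu.2]
      have hℓ0 : ℓ 0 = τ₁ := by show τ₁ + 0 * (τ₂ - τ₁) = τ₁; ring
      have hℓ1 : ℓ 1 = τ₂ := by show τ₁ + 1 * (τ₂ - τ₁) = τ₂; ring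
      set cf : ℝ → ℝ := fun v => min 1 (max 0 (2*v - 1/2)) with hcf
      have hcf01 : ∀ v, cf v ∈ Icc (0:ℝ) 1 := fun v =>
        ⟨le_min zero_le_one (le_max_left _ _), min_le_left _ _⟩
      set τf : ℝ → ℝ := fun v => t₀ + cf v * (t₁ - t₀) with hτf
      have hτf01 : ∀ v, τf v ∈ Icc (0:ℝ) 1 := by
        intro v
        obtain ⟨hc0, hc1⟩ := hcf01 v
        obtain ⟨h00, h01⟩ := ht₀I
        obtain ⟨h10, h11⟩ := ht₁I
        constructor
        · show (0:ℝ) ≤ t₀ + cf v * (t₁ - t₀); nlinarith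
        · show t₀ + cf v * (t₁ - t₀) ≤ 1; nlinarith
      set hf : ℝ → ℝ := fun v => max 0 (1 - 4*v) - max 0 (4*v - 3) with hhf
      have hf0 : hf 0 = 1 := by rw [hhf]; norm_num
      have hf1 : hf 1 = -1 := by rw [hhf]; norm_num
      have hfb : ∀ v ∈ Icc (0:ℝ) 1, -1 ≤ hf v ∧ hf v ≤ 1 := by
        intro v hv
        constructor
        · show -1 ≤ max 0 (1 - 4*v) - max 0 (4*v - 3)
          have h2 : max 0 (4*v - 3) ≤ 1 := max_le zero_le_one (by linarith [hv.2])
          linarith [le_max_left 0 (1 - 4*v)]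
        · show max 0 (1 - 4*v) - max 0 (4*v - 3) ≤ 1
          have h2 : max 0 (1 - 4*v) ≤ 1 := max_le zero_le_one (by linarith [hv.1])
          linarith [le_max_left 0 (4*v - 3)]
      set β : ℝ → ℝ × ℝ := fun v => (Ab (τf v) + lam, b (τf v) + hf v) with hβ
      have hβc : ContinuousOn β (Icc 0 1) := Continuous.continuousOn (by fun_prop)
      have hβR : ∀ v ∈ Icc (0:ℝ) 1, β v ∈ Icc xm xp ×ˢ Icc (b t₁ - 1) (b t₀ + 1) := by
        intro v hv
        refine ⟨hβx _ (hτf01 v), ?_, ?_⟩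
        · show b t₁ - 1 ≤ b (τf v) + hf v
          linarith [(hfb v hv).1, hm' (τf v)]
        · show b (τf v) + hf v ≤ b t₀ + 1
          linarith [(hfb v hv).2, hM (τf v)]
      have hτf0 : τf 0 = t₀ := by
        show t₀ + cf 0 * (t₁ - t₀) = t₀
        have : cf 0 = 0 := by rw [hcf]; norm_num
        rw [this]; ring
      have hτf1 : τf 1 = t₁ := by
        show t₀ + cf 1 * (t₁ - t₀) = t₁
        have : cf 1 = 1 := by rw [hcf]; norm_num
        rw [this]; ring
      have hβ0 : (β 0).2 = b t₀ + 1 := by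
        show b (τf 0) + hf 0 = b t₀ + 1
        rw [hτf0, hf0]
      have hβ1 : (β 1).2 = b t₁ - 1 := by
        show b (τf 1) + hf 1 = b t₁ - 1
        rw [hτf1, hf1]; ring
      obtain ⟨u, hu, v, hv, heq1, heq2⟩ :
          ∃ u ∈ Icc (0:ℝ) 1, ∃ v ∈ Icc (0:ℝ) 1,
            Ab (ℓ u) = Ab (τf v) + lam ∧ b (ℓ u) = b (τf v) + hf v := by
        rcases hor with ⟨hA1, hA2⟩ | ⟨hA1, hA2⟩
        · set α : ℝ → ℝ × ℝ := fun u => (Ab (ℓ u), b (ℓ u)) with hα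
          have hαc : ContinuousOn α (Icc 0 1) := Continuous.continuousOn (by fun_prop)
          have hαR : ∀ u ∈ Icc (0:ℝ) 1, α u ∈ Icc xm xp ×ˢ Icc (b t₁ - 1) (b t₀ + 1) := by
            intro u hu
            refine ⟨hwin _ (hℓmem u hu), ?_, ?_⟩
            · show b t₁ - 1 ≤ b (ℓ u); linarith [hm' (ℓ u)]
            · show b (ℓ u) ≤ b t₀ + 1; linarith [hM (ℓ u)]
          have hα0 : (α 0).1 = xm := by show Ab (ℓ 0) = xm; rw [hℓ0, hA1]
          have hα1 : (α 1).1 = xp := by show Ab (ℓ 1) = xp; rw [hℓ1, hA2]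
          obtain ⟨u, hu, v, hv, heq⟩ := crossing_lemma hαc hβc hαR hβR hα0 hα1 hβ0 hβ1
          exact ⟨u, hu, v, hv, congrArg Prod.fst heq, congrArg Prod.snd heq⟩
        · set α2 : ℝ → ℝ × ℝ := fun u => (xm + xp - Ab (ℓ u), b (ℓ u)) with hα2
          set β2 : ℝ → ℝ × ℝ := fun v => (xm + xp - (Ab (τf v) + lam), b (τf v) + hf v) with hβ2
          have hα2c : ContinuousOn α2 (Icc 0 1) := Continuous.continuousOn (by fun_prop)
          have hβ2c : ContinuousOn β2 (Icc 0 1) := Continuous.continuousOn (by fun_prop)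
          have hα2R : ∀ u ∈ Icc (0:ℝ) 1, α2 u ∈ Icc xm xp ×ˢ Icc (b t₁ - 1) (b t₀ + 1) := by
            intro u hu
            obtain ⟨hx1, hx2⟩ := hwin _ (hℓmem u hu)
            refine ⟨⟨by show xm ≤ xm + xp - Ab (ℓ u); linarith,
              by show xm + xp - Ab (ℓ u) ≤ xp; linarith⟩, ?_, ?_⟩
            · show b t₁ - 1 ≤ b (ℓ u); linarith [hm' (ℓ u)]
            · show b (ℓ u) ≤ b t₀ + 1; linarith [hM (ℓ u)]
          have hβ2R : ∀ v ∈ Icc (0:ℝ) 1, β2 v ∈ Icc xm xp ×ˢ Icc (b t₁ - 1) (b t₀ + 1) := by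
            intro v hv
            obtain ⟨hx1, hx2⟩ := hβx _ (hτf01 v)
            refine ⟨⟨by show xm ≤ xm + xp - (Ab (τf v) + lam); linarith,
              by show xm + xp - (Ab (τf v) + lam) ≤ xp; linarith⟩, ?_, ?_⟩
            · show b t₁ - 1 ≤ b (τf v) + hf v
              linarith [(hfb v hv).1, hm' (τf v)]
            · show b (τf v) + hf v ≤ b t₀ + 1
              linarith [(hfb v hv).2, hM (τf v)]
          have hα20 : (α2 0).1 = xm := by
            show xm + xp - Ab (ℓ 0) = xm; rw [hℓ0, hA1]; ring
          have hα21 : (α2 1).1 = xp := by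
            show xm + xp - Ab (ℓ 1) = xp; rw [hℓ1, hA2]; ring
          have hβ20 : (β2 0).2 = b t₀ + 1 := by
            show b (τf 0) + hf 0 = b t₀ + 1; rw [hτf0, hf0]
          have hβ21 : (β2 1).2 = b t₁ - 1 := by
            show b (τf 1) + hf 1 = b t₁ - 1; rw [hτf1, hf1]; ring
          obtain ⟨u, hu, v, hv, heq⟩ :=
            crossing_lemma hα2c hβ2c hα2R hβ2R hα20 hα21 hβ20 hβ21
          have heqf : xm + xp - Ab (ℓ u) = xm + xp - (Ab (τf v) + lam) := congrArg Prod.fst heq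
          exact ⟨u, hu, v, hv, by linarith, congrArg Prod.snd heq⟩
      rcases lt_trichotomy (hf v) 0 with hneg | hzero | hpos
      · have h43 : 0 < 4*v - 3 := by
          by_contra hcc
          push_neg at hcc
          have hz : max 0 (4*v-3) = 0 := max_eq_left (by linarith)
          have : hf v = max 0 (1 - 4*v) - max 0 (4*v - 3) := rfl
          rw [this, hz] at hneg
          linarith [le_max_left 0 (1 - 4*v)]
        have hτft1 : τf v = t₁ := by
          show t₀ + cf v * (t₁ - t₀) = t₁
          have : cf v = 1 := by
            show min 1 (max 0 (2*v - 1/2)) = 1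
            rw [max_eq_right (by linarith : (0:ℝ) ≤ 2*v - 1/2), min_eq_left (by linarith)]
          rw [this]; ring
        rw [hτft1] at heq2
        linarith [hm' (ℓ u)]
      · exact hkey _ _ heq1 (by rw [heq2, hzero, add_zero])
      · have h14 : 0 < 1 - 4*v := by
          by_contra hcc
          push_neg at hcc
          have hz : max 0 (1 - 4*v) = 0 := max_eq_left (by linarith)
          have : hf v = max 0 (1 - 4*v) - max 0 (4*v - 3) := rfl
          rw [this, hz] at hpos
          linarith [le_max_left 0 (4*v - 3)]
        have hτft0 : τf v = t₀ := by
          show t₀ + cf v * (t₁ - t₀) = t₀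
          have : cf v = 0 := by
            show min 1 (max 0 (2*v - 1/2)) = 0
            rw [max_eq_left (by linarith : 2*v - 1/2 ≤ (0:ℝ)), min_eq_right (by norm_num)]
          rw [this]; ring
        rw [hτft0] at heq2
        linarith [hM (ℓ u)]
    obtain ⟨s₂, hs₂⟩ := hsurj xm
    obtain ⟨s₃, hs₃⟩ := hsurj xp
    rcases le_total s₂ s₃ with hle | hle
    · obtain ⟨τ₁, τ₂, h12, h1, h2, hwin⟩ := window hAbc hle hs₂ hs₃ hxmp
      exact main τ₁ τ₂ h12 hwin (Or.inl ⟨h1, h2⟩)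
    · obtain ⟨τ₁, τ₂, h12, h1, h2, hwin⟩ := window' hAbc hle hs₃ hs₂ hxmp
      exact main τ₁ τ₂ h12 hwin (Or.inr ⟨h1, h2⟩)
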